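/- Let G be a countable abelian group carrying a ℚ-vector space structure, let G⁺ ⊆ G be a positive cone (0 ∈ G⁺, G⁺ + G⁺ ⊆ G⁺, G⁺ ∩ (−G⁺) = {0}), let u ∈ G⁺ be an order unit, let τ be a faithful state of (G, G⁺, u), and let x ∈ G \ {0} with τ(x) = 0. Then there exists a subset P ⊆ G with P + P ⊆ P, P ∩ (−P) = {0}, P ∪ (−P) = G, G⁺ ⊆ P, x ∈ P \ {0}, such that u is an order unit of (G, P) and τ is the unique state of (G, P, u). -/

import Mathlib

open Cardinal in
/-- A countable `ℚ`-vector space embeds `ℚ`-linearly into `ℝ`. -/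
lemma exists_injective_linear_to_real (G : Type*) [AddCommGroup G] [Module ℚ G]
    [Countable G] : ∃ f : G →ₗ[ℚ] ℝ, Function.Injective f := by
  classical
  let b := Module.Basis.ofVectorSpace ℚ G
  set ι := Module.Basis.ofVectorSpaceIndex ℚ G
  have hι : (ℵ₀ : Cardinal) ≤ Module.rank ℚ ℝ := by
    rw [Real.rank_rat_real]
    exact Cardinal.aleph0_le_continuum
  obtain ⟨s, hs, hsli⟩ := le_rank_iff_exists_linearIndependent.mp hι
  obtain ⟨e2⟩ : Nonempty (ℕ ≃ s) := Cardinal.eq.mp (by simpa using hs.symm)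
  obtain ⟨emb, hemb⟩ := Countable.exists_injective_nat ι
  set v : ι → ℝ := fun i => (e2 (emb i) : ℝ) with hv
  have hli : LinearIndependent ℚ v :=
    hsli.comp (fun i => e2 (emb i)) (e2.injective.comp hemb)
  refine ⟨b.constr ℚ v, ?_⟩
  have hrepr : ∀ a : G, b.constr ℚ v a =
      Finsupp.linearCombination ℚ v (b.repr a) := by
    intro a
    rw [Module.Basis.constr_apply, Finsupp.linearCombination_apply]
  intro a a' h
  rw [hrepr, hrepr] at h
  have := hli h
  exact b.repr.injective this

/-- ordered-group core of Proposition 4.3: a total refinement of the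
order making a prescribed nonzero element of the kernel of a faithful state strictly
positive, with τ the unique state. -/
theorem stmt_17 {G : Type*} [AddCommGroup G] [Module ℚ G] [Countable G]
    (Gpos : Set G)
    (hzero : (0 : G) ∈ Gpos)
    (hadd : ∀ a ∈ Gpos, ∀ b ∈ Gpos, a + b ∈ Gpos)
    (hpointed : ∀ a : G, a ∈ Gpos → -a ∈ Gpos → a = 0)
    (u : G) (hu : u ∈ Gpos)
    (hunit : ∀ y : G, ∃ n : ℕ, n • u - y ∈ Gpos)
    (τ : G →+ ℝ) (hτu : τ u = 1)
    (hτpos : ∀ y ∈ Gpos, 0 ≤ τ y)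
    (hτfaithful : ∀ y ∈ Gpos, y ≠ 0 → 0 < τ y)
    (x : G) (hx : x ≠ 0) (hτx : τ x = 0) :
    ∃ P : Set G,
      (∀ a ∈ P, ∀ b ∈ P, a + b ∈ P) ∧
      (∀ a : G, a ∈ P → -a ∈ P → a = 0) ∧
      (∀ a : G, a ∈ P ∨ -a ∈ P) ∧
      Gpos ⊆ P ∧
      x ∈ P ∧
      (u ∈ P ∧ ∀ y : G, ∃ n : ℕ, n • u - y ∈ P) ∧
      (∀ a ∈ P, 0 ≤ τ a) ∧
      (∀ ρ : G →+ ℝ, ρ u = 1 → (∀ a ∈ P, 0 ≤ ρ a) → ρ = τ) := by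
  classical
  obtain ⟨f₀, hf₀⟩ := exists_injective_linear_to_real G
  -- flip the sign if necessary so that f x ≥ 0
  set f : G →ₗ[ℚ] ℝ := if 0 ≤ f₀ x then f₀ else -f₀ with hf
  have hfinj : Function.Injective f := by
    rw [hf]; split
    · exact hf₀
    · intro a a' h
      simp only [LinearMap.neg_apply, neg_inj] at h
      exact hf₀ h
  have hfx : 0 ≤ f x := by
    rw [hf]; split
    · assumption
    · simp only [LinearMap.neg_apply]
      next h => linarith [lt_of_not_ge h]
  set P : Set G := {a | 0 < τ a ∨ (τ a = 0 ∧ 0 ≤ f a)} with hP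
  have h0P : (0 : G) ∈ P := by
    right; simp
  refine ⟨P, ?_, ?_, ?_, ?_, ?_, ⟨?_, ?_⟩, ?_, ?_⟩
  · -- additivity
    rintro a (ha | ⟨ha1, ha2⟩) b (hb | ⟨hb1, hb2⟩)
    · left; rw [map_add]; linarith [hb.le, hτpos]
      
    · left; rw [map_add]; linarith
    · left; rw [map_add]; linarith
    · right; constructor
      · rw [map_add]; linarith
      · rw [map_add]; linarith
  · -- pointed
    intro a ha hna
    rcases ha with ha | ⟨ha1, ha2⟩
    · rcases hna with hna | ⟨hna1, _⟩
      · rw [map_neg] at hna; linarith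
      · rw [map_neg] at hna1; linarith
    · rcases hna with hna | ⟨_, hna2⟩
      · rw [map_neg] at hna; linarith
      · rw [map_neg] at hna2
        have : f a = 0 := le_antisymm (by linarith) ha2
        have : f a = f 0 := by simpa using this
        exact hfinj this
  · -- total
    intro a
    rcases lt_trichotomy (τ a) 0 with h | h | h
    · right; left; rw [map_neg]; linarith
    · rcases le_or_gt 0 (f a) with h2 | h2
      · left; right; exact ⟨h, h2⟩
      · right; right
        constructor
        · rw [map_neg]; linarith
        · rw [map_neg]; linarith
    · left; left; exact h
  · -- Gpos ⊆ P
    intro y hy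
    by_cases h : y = 0
    · subst h; exact h0P
    · left; exact hτfaithful y hy h
  · -- x ∈ P
    right; exact ⟨hτx, hfx⟩
  · -- u ∈ P
    left; rw [hτu]; norm_num
  · -- order unit
    intro y
    refine ⟨⌈τ y⌉₊ + 1, Or.inl ?_⟩
    have : τ ((⌈τ y⌉₊ + 1) • u) = (⌈τ y⌉₊ + 1 : ℕ) * τ u := by
      rw [map_nsmul, nsmul_eq_mul]
    rw [map_sub, this, hτu]
    have := Nat.le_ceil (τ y)
    push_cast
    linarith
  · -- τ is a state
    rintro a (ha | ⟨ha, _⟩)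
    · exact ha.le
    · exact ha.ge
  · -- uniqueness
    intro ρ hρu hρpos
    ext a
    have key_lt : ∀ q : ℚ, (q : ℝ) < τ a → (q : ℝ) ≤ ρ a := by
      intro q hq
      have hmem : a - q • u ∈ P := by
        left
        rw [map_sub, map_rat_smul τ q u, hτu, Rat.smul_one_eq_cast]
        linarith
      have := hρpos _ hmem
      rw [map_sub, map_rat_smul ρ q u, hρu, Rat.smul_one_eq_cast] at this
      linarith
    have key_gt : ∀ q : ℚ, τ a < (q : ℝ) → ρ a ≤ (q : ℝ) := by
      intro q hq
      have hmem : q • u - a ∈ P := by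
        left
        rw [map_sub, map_rat_smul τ q u, hτu, Rat.smul_one_eq_cast]
        linarith
      have := hρpos _ hmem
      rw [map_sub, map_rat_smul ρ q u, hρu, Rat.smul_one_eq_cast] at this
      linarith
    by_contra hne
    rcases lt_or_gt_of_ne hne with h | h
    · obtain ⟨q, hq1, hq2⟩ := exists_rat_btwn h
      exact absurd (key_lt q hq2) (not_le.mpr hq1)
    · obtain ⟨q, hq1, hq2⟩ := exists_rat_btwn h
      exact absurd (key_gt q hq1) (not_le.mpr hq2)
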